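/- Let n ≥ 3, let λ be symmetric nonnegative real edge weights on the complete graph with vertex set {1,…,n}, and set B = max over j ∈ {1,…,n} and over subsets A ⊆ {1,…,n}\{j} with |A| = n − 2 of Σ_{k∈A} λ_{jk}. If z is a complex number such that μ(z, z, …, z) = 0 (the matching polynomial with all vertex variables equal to z vanishes), then Re(z) = 0 and |z| ≤ 2√B. That is, every complex root of the univariate matching polynomial μ(z,…,z) is purely imaginary of modulus at most 2√B. -/

import Mathlib

open Finset Classical

/-- A matching of the complete graph induced on the vertex set `S ⊆ Fin n`,
represented as a finset of ordered pairs `(j, k)` with `j < k` (each such pair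
encoding the unordered edge `{j, k}`), no two of which share a vertex. -/
def IsMatching (n : ℕ) (S : Finset (Fin n)) (M : Finset (Fin n × Fin n)) : Prop :=
  (∀ p ∈ M, p.1 < p.2 ∧ p.1 ∈ S ∧ p.2 ∈ S) ∧
  ∀ p ∈ M, ∀ q ∈ M, p ≠ q → p.1 ≠ q.1 ∧ p.1 ≠ q.2 ∧ p.2 ≠ q.1 ∧ p.2 ≠ q.2

/-- The matching polynomial of the complete graph induced on `S ⊆ Fin n`, with
edge weights `lam` and vertex variables `x`:
`μ_S = Σ_{M matching of S} (Π_{i ∈ S not covered by M} x i) · (Π_{{j,k} ∈ M} lam j k)`. -/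
noncomputable def mu (n : ℕ) (lam : Fin n → Fin n → ℝ) (x : Fin n → ℂ)
    (S : Finset (Fin n)) : ℂ :=
  ∑ M ∈ univ.filter (fun M : Finset (Fin n × Fin n) => IsMatching n S M),
    (∏ v ∈ S.filter (fun v => ∀ p ∈ M, v ≠ p.1 ∧ v ≠ p.2), x v) *
    ∏ p ∈ M, (lam p.1 p.2 : ℂ)

namespace HLaux

variable {n : ℕ}

noncomputable def pr (j k : Fin n) : Fin n × Fin n := if j < k then (j, k) else (k, j)

lemma pr_cases (j k : Fin n) (h : j ≠ k) : pr j k = (j, k) ∨ pr j k = (k, j) := by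
  unfold pr; split <;> simp

lemma pr_lt (j k : Fin n) (h : j ≠ k) : (pr j k).1 < (pr j k).2 := by
  unfold pr; split
  · simpa
  · rename_i h'
    simp only []
    exact lt_of_le_of_ne (le_of_not_gt h') h.symm

lemma pr_vertex {j k v : Fin n} (h : j ≠ k) :
    (v = (pr j k).1 ∨ v = (pr j k).2) ↔ (v = j ∨ v = k) := by
  rcases pr_cases j k h with hp | hp <;> rw [hp] <;> simp <;> tauto

lemma mu_empty (lam : Fin n → Fin n → ℝ) (x : Fin n → ℂ) :
    mu n lam x ∅ = 1 := by
  unfold mu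
  have h : (univ.filter fun M : Finset (Fin n × Fin n) => IsMatching n ∅ M) = {∅} := by
    ext M
    simp only [mem_filter, mem_univ, true_and, mem_singleton]
    constructor
    · rintro ⟨h1, _⟩
      by_contra hne
      obtain ⟨p, hp⟩ := Finset.nonempty_iff_ne_empty.2 hne
      exact absurd (h1 p hp).2.1 (by simp)
    · rintro rfl
      exact ⟨fun p hp => absurd hp (by simp), fun p hp => absurd hp (by simp)⟩
  rw [h]
  simp

lemma mu_rec (lam : Fin n → Fin n → ℝ) (hsymm : ∀ j k, lam j k = lam k j)
    (x : Fin n → ℂ) (S : Finset (Fin n)) (j : Fin n) (hj : j ∈ S) :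
    mu n lam x S = x j * mu n lam x (S.erase j)
      + ∑ k ∈ S.erase j, (lam j k : ℂ) * mu n lam x ((S.erase j).erase k) := by
  classical
  conv_lhs => rw [mu]
  rw [← Finset.sum_filter_add_sum_filter_not
      (univ.filter fun M : Finset (Fin n × Fin n) => IsMatching n S M)
      (fun M => ∀ p ∈ M, j ≠ p.1 ∧ j ≠ p.2)]
  congr 1
  · -- uncovered case
    have hset : ((univ.filter fun M : Finset (Fin n × Fin n) => IsMatching n S M).filter
          (fun M => ∀ p ∈ M, j ≠ p.1 ∧ j ≠ p.2))
        = univ.filter (fun M : Finset (Fin n × Fin n) => IsMatching n (S.erase j) M) := by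
      ext M
      simp only [mem_filter, mem_univ, true_and]
      constructor
      · rintro ⟨⟨h1, h2⟩, h3⟩
        refine ⟨fun p hp => ⟨(h1 p hp).1, ?_, ?_⟩, h2⟩
        · exact mem_erase.2 ⟨fun he => (h3 p hp).1 (he ▸ rfl), (h1 p hp).2.1⟩
        · exact mem_erase.2 ⟨fun he => (h3 p hp).2 (he ▸ rfl), (h1 p hp).2.2⟩
      · rintro ⟨h1, h2⟩
        refine ⟨⟨fun p hp => ⟨(h1 p hp).1, mem_of_mem_erase (h1 p hp).2.1,
            mem_of_mem_erase (h1 p hp).2.2⟩, h2⟩, fun p hp => ?_⟩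
        exact ⟨fun he => (mem_erase.1 (h1 p hp).2.1).1 he.symm,
          fun he => (mem_erase.1 (h1 p hp).2.2).1 he.symm⟩
    rw [hset, mu, Finset.mul_sum]
    refine Finset.sum_congr rfl fun M hM => ?_
    simp only [mem_filter, mem_univ, true_and] at hM
    have hjunc : ∀ p ∈ M, j ≠ p.1 ∧ j ≠ p.2 := by
      intro p hp
      exact ⟨fun he => (mem_erase.1 (hM.1 p hp).2.1).1 he.symm,
        fun he => (mem_erase.1 (hM.1 p hp).2.2).1 he.symm⟩
    have hfil : S.filter (fun v => ∀ p ∈ M, v ≠ p.1 ∧ v ≠ p.2)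
        = insert j ((S.erase j).filter (fun v => ∀ p ∈ M, v ≠ p.1 ∧ v ≠ p.2)) := by
      conv_lhs => rw [← Finset.insert_erase hj]
      rw [Finset.filter_insert, if_pos hjunc]
    rw [hfil, Finset.prod_insert (by simp)]
    ring
  · -- covered case
    have hdisj : ∀ k ∈ S.erase j, ∀ k' ∈ S.erase j, k ≠ k' → Disjoint
        ((univ.filter fun M : Finset (Fin n × Fin n) => IsMatching n S M ∧ pr j k ∈ M))
        ((univ.filter fun M : Finset (Fin n × Fin n) => IsMatching n S M ∧ pr j k' ∈ M)) := by
      intro k hk k' hk' hkk'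
      rw [Finset.disjoint_left]
      intro M hM hM'
      simp only [mem_filter, mem_univ, true_and] at hM hM'
      have hjk : j ≠ k := fun h => (mem_erase.1 hk).1 h.symm
      have hjk' : j ≠ k' := fun h => (mem_erase.1 hk').1 h.symm
      have hne : pr j k ≠ pr j k' := by
        intro h
        rcases pr_cases j k hjk with h1 | h1 <;> rcases pr_cases j k' hjk' with h2 | h2 <;>
          rw [h1, h2] at h <;> simp [Prod.ext_iff] at h <;> tauto
      obtain ⟨hMa, hMb⟩ := hM.1
      have := hMb _ hM.2 _ hM'.2 hne
      rcases pr_cases j k hjk with h1 | h1 <;> rcases pr_cases j k' hjk' with h2 | h2 <;>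
        rw [h1, h2] at this <;> simp at this <;> tauto
    have hset : ((univ.filter fun M : Finset (Fin n × Fin n) => IsMatching n S M).filter
          (fun M => ¬ ∀ p ∈ M, j ≠ p.1 ∧ j ≠ p.2))
        = (S.erase j).biUnion (fun k =>
            univ.filter fun M : Finset (Fin n × Fin n) => IsMatching n S M ∧ pr j k ∈ M) := by
      ext M
      simp only [mem_filter, mem_univ, true_and, mem_biUnion]
      constructor
      · rintro ⟨hM, hcov⟩
        push_neg at hcov
        obtain ⟨p, hp, hjp⟩ := hcov
        obtain ⟨hMa, hMb⟩ := hM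
        have hplt := (hMa p hp).1
        by_cases hcase : j = p.1
        · refine ⟨p.2, mem_erase.2 ⟨fun h => by omega, (hMa p hp).2.2⟩, ⟨hMa, hMb⟩, ?_⟩
          have h2 : pr j p.2 = (j, p.2) := by unfold pr; rw [if_pos (by omega)]
          rw [h2, hcase]
          simpa using hp
        · have hj2 : j = p.2 := hjp hcase
          refine ⟨p.1, mem_erase.2 ⟨fun h => by omega, (hMa p hp).2.1⟩, ⟨hMa, hMb⟩, ?_⟩
          have h2 : pr j p.1 = (p.1, j) := by unfold pr; rw [if_neg (by omega)]
          rw [h2, hj2]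
          simpa using hp
      · rintro ⟨k, hk, hM, hpM⟩
        refine ⟨hM, fun hall => ?_⟩
        have hjk : j ≠ k := fun h => (mem_erase.1 hk).1 h.symm
        have := hall _ hpM
        rcases pr_cases j k hjk with h1 | h1 <;> rw [h1] at this <;> simp at this <;> tauto
    rw [hset, Finset.sum_biUnion]
    swap
    · exact fun k hk k' hk' h => hdisj k hk k' hk' h
    refine Finset.sum_congr rfl fun k hk => ?_
    have hjk : j ≠ k := fun h => (mem_erase.1 hk).1 h.symm
    have hkS : k ∈ S := mem_of_mem_erase hk
    set e := pr j k with he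
    set T := (S.erase j).erase k with hT
    have hjT : j ∉ T := by simp [hT]
    have hkT : k ∉ T := by simp [hT]
    have hTsub : T ⊆ S := (Finset.erase_subset _ _).trans (Finset.erase_subset _ _)
    have hevert : ∀ v : Fin n, (v = e.1 ∨ v = e.2) ↔ (v = j ∨ v = k) :=
      fun v => pr_vertex hjk
    rw [mu, Finset.mul_sum]
    refine Eq.symm (Finset.sum_nbij' (fun M' => insert e M') (fun M => M.erase e) ?_ ?_ ?_ ?_ ?_)
    · -- insert maps into A_k
      intro M' hM'
      simp only [mem_filter, mem_univ, true_and] at hM' ⊢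
      unfold IsMatching at hM' ⊢
      have hvert : ∀ p ∈ M', p.1 ∈ T ∧ p.2 ∈ T := fun p hp => ⟨(hM'.1 p hp).2.1, (hM'.1 p hp).2.2⟩
      have hnotjk : ∀ v ∈ T, v ≠ e.1 ∧ v ≠ e.2 := by
        intro v hv
        constructor <;> intro hcon
        · rcases (hevert v).1 (Or.inl hcon) with h | h
          · exact hjT (h ▸ hv)
          · exact hkT (h ▸ hv)
        · rcases (hevert v).1 (Or.inr hcon) with h | h
          · exact hjT (h ▸ hv)
          · exact hkT (h ▸ hv)
      have heS : e.1 ∈ S ∧ e.2 ∈ S := by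
        constructor
        · rcases (hevert e.1).1 (Or.inl rfl) with h1 | h1 <;> rw [h1] <;> assumption
        · rcases (hevert e.2).1 (Or.inr rfl) with h1 | h1 <;> rw [h1] <;> assumption
      have helt : e.1 < e.2 := by rw [he]; exact pr_lt j k hjk
      have hsep : ∀ q ∈ M', e.1 ≠ q.1 ∧ e.1 ≠ q.2 ∧ e.2 ≠ q.1 ∧ e.2 ≠ q.2 := by
        intro q hq
        exact ⟨Ne.symm (hnotjk q.1 (hvert q hq).1).1, Ne.symm (hnotjk q.2 (hvert q hq).2).1,
          Ne.symm (hnotjk q.1 (hvert q hq).1).2, Ne.symm (hnotjk q.2 (hvert q hq).2).2⟩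
      refine ⟨⟨?_, ?_⟩, Finset.mem_insert_self e M'⟩
      · intro p hp
        rcases Finset.mem_insert.1 hp with rfl | hp
        · exact ⟨helt, heS.1, heS.2⟩
        · exact ⟨(hM'.1 p hp).1, hTsub (hvert p hp).1, hTsub (hvert p hp).2⟩
      · intro p hp q hq hpq
        rcases Finset.mem_insert.1 hp with rfl | hp <;> rcases Finset.mem_insert.1 hq with rfl | hq
        · exact absurd rfl hpq
        · exact hsep q hq
        · obtain ⟨a, b, c, d⟩ := hsep p hp
          exact ⟨Ne.symm a, Ne.symm c, Ne.symm b, Ne.symm d⟩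
        · exact hM'.2 p hp q hq hpq
    · -- erase maps back
      intro M hM
      simp only [mem_filter, mem_univ, true_and] at hM ⊢
      unfold IsMatching at hM ⊢
      obtain ⟨⟨h1, h2⟩, heM⟩ := hM
      constructor
      · intro p hp
        obtain ⟨hpe, hpM⟩ := Finset.mem_erase.1 hp
        have hcol := h2 p hpM e heM hpe
        refine ⟨(h1 p hpM).1, ?_, ?_⟩
        · refine Finset.mem_erase.2 ⟨?_, Finset.mem_erase.2 ⟨?_, (h1 p hpM).2.1⟩⟩
          · intro hcon
            rcases (hevert p.1).2 (Or.inr hcon) with h | h <;> tauto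
          · intro hcon
            rcases (hevert p.1).2 (Or.inl hcon) with h | h <;> tauto
        · refine Finset.mem_erase.2 ⟨?_, Finset.mem_erase.2 ⟨?_, (h1 p hpM).2.2⟩⟩
          · intro hcon
            rcases (hevert p.2).2 (Or.inr hcon) with h | h <;> tauto
          · intro hcon
            rcases (hevert p.2).2 (Or.inl hcon) with h | h <;> tauto
      · intro p hp q hq hpq
        exact h2 p (Finset.mem_of_mem_erase hp) q (Finset.mem_of_mem_erase hq) hpq
    · -- left inverse
      intro M' hM'
      simp only [mem_filter, mem_univ, true_and] at hM'
      unfold IsMatching at hM'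
      have heM' : e ∉ M' := by
        intro h
        have h1 := (hM'.1 e h).2.1
        rcases (hevert e.1).1 (Or.inl rfl) with hh | hh
        · exact hjT (hh ▸ h1)
        · exact hkT (hh ▸ h1)
      exact Finset.erase_insert heM'
    · -- right inverse
      intro M hM
      simp only [mem_filter, mem_univ, true_and] at hM
      exact Finset.insert_erase hM.2
    · -- values
      intro M' hM'
      simp only [mem_filter, mem_univ, true_and] at hM'
      unfold IsMatching at hM'
      have hvert : ∀ p ∈ M', p.1 ∈ T ∧ p.2 ∈ T := fun p hp => ⟨(hM'.1 p hp).2.1, (hM'.1 p hp).2.2⟩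
      have heM' : e ∉ M' := by
        intro h
        have h1 := (hvert e h).1
        rcases (hevert e.1).1 (Or.inl rfl) with hh | hh
        · exact hjT (hh ▸ h1)
        · exact hkT (hh ▸ h1)
      have hfil : S.filter (fun v => ∀ p ∈ insert e M', v ≠ p.1 ∧ v ≠ p.2)
          = T.filter (fun v => ∀ p ∈ M', v ≠ p.1 ∧ v ≠ p.2) := by
        ext v
        simp only [mem_filter, Finset.forall_mem_insert, hT, mem_erase]
        constructor
        · rintro ⟨hvS, ⟨hv1, hv2⟩, hrest⟩
          refine ⟨⟨?_, ?_, hvS⟩, hrest⟩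
          · intro hcon
            exact absurd ((hevert v).2 (Or.inr hcon)) (by tauto)
          · intro hcon
            exact absurd ((hevert v).2 (Or.inl hcon)) (by tauto)
        · rintro ⟨⟨hvk, hvj, hvS⟩, hrest⟩
          refine ⟨hvS, ⟨?_, ?_⟩, hrest⟩
          · intro hcon
            rcases (hevert v).1 (Or.inl hcon) with h | h <;> tauto
          · intro hcon
            rcases (hevert v).1 (Or.inr hcon) with h | h <;> tauto
      have hlam : (lam e.1 e.2 : ℂ) = (lam j k : ℂ) := by
        rcases pr_cases j k hjk with h1 | h1 <;> rw [he, h1] <;> simp [hsymm j k]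
      rw [Finset.prod_insert heM', hfil, hlam]
      ring

lemma half_helper {a b c : ℝ} (ha : 0 < a) (h : a / 2 * b ≤ c) : b ≤ 2 / a * c := by
  rw [div_mul_eq_mul_div, le_div_iff₀ ha]
  nlinarith

lemma sum_le_B (lam : Fin n → Fin n → ℝ) (hnonneg : ∀ j k, 0 ≤ lam j k) (B : ℝ)
    (hB : IsGreatest {s : ℝ | ∃ j : Fin n, ∃ A : Finset (Fin n),
        A ⊆ Finset.univ \ {j} ∧ A.card = n - 2 ∧ s = ∑ k ∈ A, lam j k} B)
    (j : Fin n) (T : Finset (Fin n)) (hT : T ⊆ univ.erase j) (hcard : T.card ≤ n - 2) :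
    ∑ k ∈ T, lam j k ≤ B := by
  have hTe : T ⊆ (univ : Finset (Fin n)) \ {j} := by
    rwa [sdiff_singleton_eq_erase]
  have hce : ((univ : Finset (Fin n)) \ {j}).card = n - 1 := by
    rw [sdiff_singleton_eq_erase, card_erase_of_mem (mem_univ j), card_univ, Fintype.card_fin]
  obtain ⟨A, hTA, hAe, hAcard⟩ := Finset.exists_subsuperset_card_eq hTe hcard (by omega)
  calc ∑ k ∈ T, lam j k ≤ ∑ k ∈ A, lam j k :=
        Finset.sum_le_sum_of_subset_of_nonneg hTA (fun i _ _ => hnonneg j i)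
    _ ≤ B := hB.2 ⟨j, A, hAe, hAcard, rfl⟩

lemma sum_all_le_2B (hn : 3 ≤ n) (lam : Fin n → Fin n → ℝ) (hnonneg : ∀ j k, 0 ≤ lam j k) (B : ℝ)
    (hB : IsGreatest {s : ℝ | ∃ j : Fin n, ∃ A : Finset (Fin n),
        A ⊆ Finset.univ \ {j} ∧ A.card = n - 2 ∧ s = ∑ k ∈ A, lam j k} B)
    (j : Fin n) : ∑ k ∈ univ.erase j, lam j k ≤ 2 * B := by
  have hne : (univ.erase j : Finset (Fin n)).Nonempty := by
    rw [← Finset.card_pos, card_erase_of_mem (mem_univ j), card_univ, Fintype.card_fin]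
    omega
  obtain ⟨k0, hk0⟩ := hne
  rw [← Finset.sum_erase_add _ _ hk0]
  have h1 : ∑ k ∈ (univ.erase j).erase k0, lam j k ≤ B := by
    apply sum_le_B lam hnonneg B hB j _ ((Finset.erase_subset _ _))
    rw [card_erase_of_mem hk0, card_erase_of_mem (mem_univ j), card_univ, Fintype.card_fin]
    omega
  have h2 : lam j k0 ≤ B := by
    have := sum_le_B lam hnonneg B hB j {k0} (Finset.singleton_subset_iff.2 hk0) (by simp; omega)
    simpa using this
  linarith

lemma mu_ne_zero_of_re (lam : Fin n → Fin n → ℝ) (hsymm : ∀ j k, lam j k = lam k j)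
    (hnonneg : ∀ j k, 0 ≤ lam j k) (z : ℂ) (s : ℝ) (hs : 0 < s * z.re)
    (S : Finset (Fin n)) :
    mu n lam (fun _ => z) S ≠ 0 ∧ ∀ j ∈ S,
      s * z.re * Complex.normSq (mu n lam (fun _ => z) (S.erase j))
        ≤ s * (mu n lam (fun _ => z) S *
            (starRingEnd ℂ) (mu n lam (fun _ => z) (S.erase j))).re := by
  induction S using Finset.strongInduction with
  | _ S ih =>
    have key : ∀ j ∈ S,
        s * z.re * Complex.normSq (mu n lam (fun _ => z) (S.erase j))
          ≤ s * (mu n lam (fun _ => z) S *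
              (starRingEnd ℂ) (mu n lam (fun _ => z) (S.erase j))).re := by
      intro j hj
      have ih' := ih (S.erase j) (Finset.erase_ssubset hj)
      have hrec := mu_rec lam hsymm (fun _ => z) S j hj
      have hx : mu n lam (fun _ => z) S *
            (starRingEnd ℂ) (mu n lam (fun _ => z) (S.erase j))
          = z * (Complex.normSq (mu n lam (fun _ => z) (S.erase j)) : ℂ)
            + ∑ k ∈ S.erase j, (lam j k : ℂ) *
              (mu n lam (fun _ => z) ((S.erase j).erase k) *
                (starRingEnd ℂ) (mu n lam (fun _ => z) (S.erase j))) := by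
        rw [hrec, add_mul, Finset.sum_mul, mul_assoc, Complex.mul_conj]
        congr 1
        refine Finset.sum_congr rfl fun k _ => by ring
      rw [hx, Complex.add_re]
      have h1 : (z * (Complex.normSq (mu n lam (fun _ => z) (S.erase j)) : ℂ)).re
          = z.re * Complex.normSq (mu n lam (fun _ => z) (S.erase j)) := by
        simp [Complex.mul_re]
      have h2 : (∑ k ∈ S.erase j, (lam j k : ℂ) *
              (mu n lam (fun _ => z) ((S.erase j).erase k) *
                (starRingEnd ℂ) (mu n lam (fun _ => z) (S.erase j)))).re
          = ∑ k ∈ S.erase j, lam j k *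
              (mu n lam (fun _ => z) ((S.erase j).erase k) *
                (starRingEnd ℂ) (mu n lam (fun _ => z) (S.erase j))).re := by
        rw [Complex.re_sum]
        exact Finset.sum_congr rfl fun k _ => by simp [Complex.mul_re]
      rw [h1, h2, mul_add, Finset.mul_sum]
      have hsum : 0 ≤ ∑ k ∈ S.erase j, s * (lam j k *
          (mu n lam (fun _ => z) ((S.erase j).erase k) *
            (starRingEnd ℂ) (mu n lam (fun _ => z) (S.erase j))).re) := by
        apply Finset.sum_nonneg
        intro k hk
        have hflip : (mu n lam (fun _ => z) ((S.erase j).erase k) *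
              (starRingEnd ℂ) (mu n lam (fun _ => z) (S.erase j))).re
            = (mu n lam (fun _ => z) (S.erase j) *
              (starRingEnd ℂ) (mu n lam (fun _ => z) ((S.erase j).erase k))).re := by
          rw [← Complex.conj_re (mu n lam (fun _ => z) ((S.erase j).erase k) *
            (starRingEnd ℂ) (mu n lam (fun _ => z) (S.erase j))), map_mul, Complex.conj_conj,
            mul_comm]
        have hin := ih'.2 k hk
        have h0 : 0 ≤ s * (mu n lam (fun _ => z) (S.erase j) *
            (starRingEnd ℂ) (mu n lam (fun _ => z) ((S.erase j).erase k))).re :=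
          le_trans (mul_nonneg hs.le (Complex.normSq_nonneg _)) hin
        calc (0:ℝ) ≤ lam j k * (s * (mu n lam (fun _ => z) (S.erase j) *
            (starRingEnd ℂ) (mu n lam (fun _ => z) ((S.erase j).erase k))).re) :=
              mul_nonneg (hnonneg j k) h0
          _ = s * (lam j k * (mu n lam (fun _ => z) ((S.erase j).erase k) *
              (starRingEnd ℂ) (mu n lam (fun _ => z) (S.erase j))).re) := by
              rw [hflip]; ring
      linarith
    constructor
    · rcases S.eq_empty_or_nonempty with rfl | ⟨j, hj⟩
      · rw [mu_empty]; exact one_ne_zero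
      · intro h0
        have h1 := key j hj
        rw [h0, zero_mul] at h1
        have hmu' := (ih (S.erase j) (Finset.erase_ssubset hj)).1
        have hpos : 0 < Complex.normSq (mu n lam (fun _ => z) (S.erase j)) :=
          Complex.normSq_pos.2 hmu'
        simp only [Complex.zero_re, mul_zero] at h1
        nlinarith
    · exact key

lemma mu_abs_lower (hn : 3 ≤ n) (lam : Fin n → Fin n → ℝ)
    (hsymm : ∀ j k, lam j k = lam k j) (hnonneg : ∀ j k, 0 ≤ lam j k) (B : ℝ)
    (hB : IsGreatest {s : ℝ | ∃ j : Fin n, ∃ A : Finset (Fin n),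
        A ⊆ Finset.univ \ {j} ∧ A.card = n - 2 ∧ s = ∑ k ∈ A, lam j k} B)
    (z : ℂ) (hz4 : 4 * B < ‖z‖ ^ 2) (hz0 : 0 < ‖z‖)
    (S : Finset (Fin n)) :
    S.card ≤ n - 1 →
      mu n lam (fun _ => z) S ≠ 0 ∧ ∀ j ∈ S,
        ‖z‖ / 2 * ‖mu n lam (fun _ => z) (S.erase j)‖
          < ‖mu n lam (fun _ => z) S‖ := by
  induction S using Finset.strongInduction with
  | _ S ih =>
    intro hcard
    have hB0 : 0 ≤ B := by
      obtain ⟨j0, A, _, _, rfl⟩ := hB.1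
      exact Finset.sum_nonneg fun k _ => hnonneg j0 k
    have key : ∀ j ∈ S,
        ‖z‖ / 2 * ‖mu n lam (fun _ => z) (S.erase j)‖
          < ‖mu n lam (fun _ => z) S‖ := by
      intro j hj
      have hcard' : (S.erase j).card ≤ n - 1 :=
        le_trans (Finset.card_le_card (Finset.erase_subset _ _)) hcard
      have ih' := ih (S.erase j) (Finset.erase_ssubset hj) hcard'
      have hmu'pos : 0 < ‖mu n lam (fun _ => z) (S.erase j)‖ :=
        norm_pos_iff.2 ih'.1
      have hsum_le : ∑ k ∈ S.erase j, lam j k ≤ B := by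
        apply sum_le_B lam hnonneg B hB j _
          (Finset.erase_subset_erase j (Finset.subset_univ S))
        rw [card_erase_of_mem hj]
        omega
      have hrec := mu_rec lam hsymm (fun _ => z) S j hj
      have h1 : ‖∑ k ∈ S.erase j, (lam j k : ℂ) *
            mu n lam (fun _ => z) ((S.erase j).erase k)‖
          < ‖z‖ / 2 * ‖mu n lam (fun _ => z) (S.erase j)‖ := by
        calc ‖∑ k ∈ S.erase j, (lam j k : ℂ) *
              mu n lam (fun _ => z) ((S.erase j).erase k)‖
            ≤ ∑ k ∈ S.erase j, ‖(lam j k : ℂ) *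
              mu n lam (fun _ => z) ((S.erase j).erase k)‖ :=
              norm_sum_le _ _
          _ ≤ ∑ k ∈ S.erase j, lam j k *
              (2 / ‖z‖ * ‖mu n lam (fun _ => z) (S.erase j)‖) := by
              apply Finset.sum_le_sum
              intro k hk
              rw [norm_mul, Complex.norm_of_nonneg (hnonneg j k)]
              apply mul_le_mul_of_nonneg_left _ (hnonneg j k)
              exact half_helper hz0 (le_of_lt (ih'.2 k hk))
          _ = (∑ k ∈ S.erase j, lam j k) *
              (2 / ‖z‖ * ‖mu n lam (fun _ => z) (S.erase j)‖) :=
              (Finset.sum_mul _ _ _).symm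
          _ ≤ B * (2 / ‖z‖ * ‖mu n lam (fun _ => z) (S.erase j)‖) :=
              mul_le_mul_of_nonneg_right hsum_le (by positivity)
          _ < ‖z‖ / 2 * ‖mu n lam (fun _ => z) (S.erase j)‖ := by
              rw [← mul_assoc]
              apply mul_lt_mul_of_pos_right _ hmu'pos
              rw [mul_div_assoc', div_lt_div_iff₀ hz0 (by norm_num : (0:ℝ) < 2)]
              nlinarith
      have h2 : ‖z‖ * ‖mu n lam (fun _ => z) (S.erase j)‖
            - ‖∑ k ∈ S.erase j, (lam j k : ℂ) *
              mu n lam (fun _ => z) ((S.erase j).erase k)‖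
          ≤ ‖mu n lam (fun _ => z) S‖ := by
        rw [hrec]
        have h3 := norm_add_le
          (z * mu n lam (fun _ => z) (S.erase j)
            + ∑ k ∈ S.erase j, (lam j k : ℂ) * mu n lam (fun _ => z) ((S.erase j).erase k))
          (-(∑ k ∈ S.erase j, (lam j k : ℂ) * mu n lam (fun _ => z) ((S.erase j).erase k)))
        rw [add_neg_cancel_right, norm_neg, norm_mul] at h3
        linarith
      linarith
    constructor
    · rcases S.eq_empty_or_nonempty with rfl | ⟨j, hj⟩
      · rw [mu_empty]; exact one_ne_zero
      · intro h0
        have h1 := key j hj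
        rw [h0, norm_zero] at h1
        have hcard' : (S.erase j).card ≤ n - 1 :=
          le_trans (Finset.card_le_card (Finset.erase_subset _ _)) hcard
        have hmu'pos : 0 < ‖mu n lam (fun _ => z) (S.erase j)‖ :=
          norm_pos_iff.2 (ih (S.erase j) (Finset.erase_ssubset hj) hcard').1
        nlinarith
    · exact key

end HLaux


/-- **Location of the roots of the univariate matching polynomial.** For `n ≥ 3`,
with `B` the Heilmann–Lieb bound `max_j max_{A ⊆ {1,…,n}∖{j}, |A| = n−2} Σ_{k∈A} lam j k`,
every complex root `z` of `μ(z,…,z)` is purely imaginary with `|z| ≤ 2√B`. -/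
theorem matching_roots_imaginary (n : ℕ) (hn : 3 ≤ n)
    (lam : Fin n → Fin n → ℝ)
    (hsymm : ∀ j k, lam j k = lam k j)
    (hnonneg : ∀ j k, 0 ≤ lam j k)
    (hdiag : ∀ j, lam j j = 0)
    (B : ℝ)
    (hB : IsGreatest {s : ℝ | ∃ j : Fin n, ∃ A : Finset (Fin n),
        A ⊆ Finset.univ \ {j} ∧ A.card = n - 2 ∧ s = ∑ k ∈ A, lam j k} B)
    (z : ℂ) (hz : mu n lam (fun _ => z) Finset.univ = 0) :
    z.re = 0 ∧ ‖z‖ ≤ 2 * Real.sqrt B := by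
  have hB0 : 0 ≤ B := by
    obtain ⟨j0, A, _, _, rfl⟩ := hB.1
    exact Finset.sum_nonneg fun k _ => hnonneg j0 k
  constructor
  · by_contra hre
    have hs' : 0 < (if 0 < z.re then (1:ℝ) else -1) * z.re := by
      rcases lt_trichotomy z.re 0 with h | h | h
      · rw [if_neg (by linarith)]; nlinarith
      · exact absurd h hre
      · rw [if_pos h]; nlinarith
    exact (HLaux.mu_ne_zero_of_re lam hsymm hnonneg z _ hs' Finset.univ).1 hz
  · by_contra hlt
    push_neg at hlt
    have hz0 : 0 < ‖z‖ := lt_of_le_of_lt (by positivity) hlt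
    have h4B : 4 * B < ‖z‖ ^ 2 := by
      have h1 : (2 * Real.sqrt B) ^ 2 < ‖z‖ ^ 2 := by
        apply sq_lt_sq' _ hlt
        nlinarith [Real.sqrt_nonneg B]
      have h2 : (2 * Real.sqrt B) ^ 2 = 4 * B := by
        rw [mul_pow, Real.sq_sqrt hB0]; ring
      linarith
    set j : Fin n := ⟨0, by omega⟩ with hjdef
    have hcards : (univ.erase j : Finset (Fin n)).card ≤ n - 1 := by
      rw [card_erase_of_mem (mem_univ j), card_univ, Fintype.card_fin]
    have H := HLaux.mu_abs_lower hn lam hsymm hnonneg B hB z h4B hz0 (univ.erase j) hcards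
    have hmu'pos : 0 < ‖mu n lam (fun _ => z) (univ.erase j)‖ :=
      norm_pos_iff.2 H.1
    have hrec := HLaux.mu_rec lam hsymm (fun _ => z) univ j (mem_univ j)
    rw [hz] at hrec
    have heq : z * mu n lam (fun _ => z) (univ.erase j)
        = -(∑ k ∈ univ.erase j, (lam j k : ℂ) *
            mu n lam (fun _ => z) ((univ.erase j).erase k)) := by
      linear_combination -hrec
    have hsum2B := HLaux.sum_all_le_2B hn lam hnonneg B hB j
    have hbound : ‖∑ k ∈ univ.erase j, (lam j k : ℂ) *
          mu n lam (fun _ => z) ((univ.erase j).erase k)‖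
        ≤ 2 * B * (2 / ‖z‖ * ‖mu n lam (fun _ => z) (univ.erase j)‖) := by
      calc ‖∑ k ∈ univ.erase j, (lam j k : ℂ) *
            mu n lam (fun _ => z) ((univ.erase j).erase k)‖
          ≤ ∑ k ∈ univ.erase j, ‖(lam j k : ℂ) *
            mu n lam (fun _ => z) ((univ.erase j).erase k)‖ := norm_sum_le _ _
        _ ≤ ∑ k ∈ univ.erase j, lam j k *
            (2 / ‖z‖ * ‖mu n lam (fun _ => z) (univ.erase j)‖) := by
            apply Finset.sum_le_sum
            intro k hk
            rw [norm_mul, Complex.norm_of_nonneg (hnonneg j k)]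
            apply mul_le_mul_of_nonneg_left _ (hnonneg j k)
            exact HLaux.half_helper hz0 (le_of_lt (H.2 k hk))
        _ = (∑ k ∈ univ.erase j, lam j k) *
            (2 / ‖z‖ * ‖mu n lam (fun _ => z) (univ.erase j)‖) :=
            (Finset.sum_mul _ _ _).symm
        _ ≤ 2 * B * (2 / ‖z‖ * ‖mu n lam (fun _ => z) (univ.erase j)‖) :=
            mul_le_mul_of_nonneg_right hsum2B (by positivity)
    have hZ : ‖z‖ * ‖mu n lam (fun _ => z) (univ.erase j)‖
        = ‖∑ k ∈ univ.erase j, (lam j k : ℂ) *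
            mu n lam (fun _ => z) ((univ.erase j).erase k)‖ := by
      rw [← norm_mul, heq, norm_neg]
    rw [← hZ] at hbound
    have hdiv : 2 * B * (2 / ‖z‖ *
          ‖mu n lam (fun _ => z) (univ.erase j)‖)
        = 4 * B / ‖z‖ * ‖mu n lam (fun _ => z) (univ.erase j)‖ := by
      ring
    rw [hdiv] at hbound
    have : ‖z‖ ≤ 4 * B / ‖z‖ :=
      le_of_mul_le_mul_right hbound hmu'pos
    rw [le_div_iff₀ hz0] at this
    nlinarith
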